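/- Suppose {E_{C_m}T_{Bn}g}_{m∈ℤ, n∈ℤ^d} is a K-Weyl-Heisenberg frame for L²(ℝ^d) with bounds A and B, and {E_{C_m}}_{m∈ℤ} is a frame for L²([0,τ]^d) with bounds A₀, B₀ for some τ > 0. Then Σ_{n∈ℤ^d}|g(t−Bn)|² ≤ (B/A₀)‖K‖² for almost every t ∈ ℝ^d. -/

import Mathlib

open MeasureTheory

/-- The Gabor (Weyl–Heisenberg) system element `E_C T_b g`. -/
noncomputable def gaborFn11 {d : ℕ} (C b : EuclideanSpace ℝ (Fin d))
    (g : EuclideanSpace ℝ (Fin d) → ℂ) : EuclideanSpace ℝ (Fin d) → ℂ :=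
  fun t => Complex.exp (2 * Real.pi * Complex.I * ((inner ℝ C t : ℝ) : ℂ)) * g (t - b)

private lemma exp_norm_one11 (r : ℝ) : ‖Complex.exp (2 * Real.pi * Complex.I * (r:ℂ))‖ = 1 := by
  have h : (2 * Real.pi : ℂ) * Complex.I * r = ((2 * Real.pi * r : ℝ) : ℂ) * Complex.I := by
    push_cast; ring
  rw [h, Complex.norm_exp_ofReal_mul_I]

private lemma conj_exp11 (r : ℝ) :
    (starRingEnd ℂ) (Complex.exp (2 * Real.pi * Complex.I * (r:ℂ)))
      = Complex.exp (2 * Real.pi * Complex.I * ((-r : ℝ):ℂ)) := by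
  rw [← Complex.exp_conj]
  congr 1
  have : ((2:ℂ) * Real.pi * Complex.I * r) = ((2 * Real.pi * r : ℝ):ℂ) * Complex.I := by
    push_cast; ring
  rw [this, map_mul, Complex.conj_I, Complex.conj_ofReal]
  push_cast; ring

private lemma frame_translate11 {d : ℕ}
    (C : ℤ → EuclideanSpace ℝ (Fin d)) (A0 B0 τ : ℝ)
    (hframe : ∀ h : EuclideanSpace ℝ (Fin d) → ℂ,
      MemLp h 2 (volume : Measure (EuclideanSpace ℝ (Fin d))) →
      (∀ t : EuclideanSpace ℝ (Fin d), (∃ i, t i ∉ Set.Icc (0 : ℝ) τ) → h t = 0) →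
      A0 * ∫ t, ‖h t‖ ^ 2 ≤ (∑' m : ℤ, ‖∫ t, h t * (starRingEnd ℂ)
          (Complex.exp (2 * Real.pi * Complex.I * ((inner ℝ (C m) t : ℝ) : ℂ)))‖ ^ 2) ∧
      (∑' m : ℤ, ‖∫ t, h t * (starRingEnd ℂ)
          (Complex.exp (2 * Real.pi * Complex.I * ((inner ℝ (C m) t : ℝ) : ℂ)))‖ ^ 2)
        ≤ B0 * ∫ t, ‖h t‖ ^ 2)
    (t₀ : EuclideanSpace ℝ (Fin d))
    (h : EuclideanSpace ℝ (Fin d) → ℂ)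
    (hmem : MemLp h 2 (volume : Measure (EuclideanSpace ℝ (Fin d))))
    (hsupp : ∀ t : EuclideanSpace ℝ (Fin d),
      (∃ i, t i ∉ Set.Icc (t₀ i) (t₀ i + τ)) → h t = 0) :
    A0 * ∫ t, ‖h t‖ ^ 2 ≤ (∑' m : ℤ, ‖∫ t, h t * (starRingEnd ℂ)
        (Complex.exp (2 * Real.pi * Complex.I * ((inner ℝ (C m) t : ℝ) : ℂ)))‖ ^ 2) ∧
    (∑' m : ℤ, ‖∫ t, h t * (starRingEnd ℂ)
        (Complex.exp (2 * Real.pi * Complex.I * ((inner ℝ (C m) t : ℝ) : ℂ)))‖ ^ 2)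
      ≤ B0 * ∫ t, ‖h t‖ ^ 2 := by
  set h' : EuclideanSpace ℝ (Fin d) → ℂ := fun s => h (s + t₀) with hh'
  have hmp : MeasurePreserving (fun s : EuclideanSpace ℝ (Fin d) => s + t₀) volume volume :=
    measurePreserving_add_right volume t₀
  have hmem' : MemLp h' 2 (volume : Measure (EuclideanSpace ℝ (Fin d))) := by
    have := hmem
    rw [← hmp.map_eq] at this
    exact this.comp_of_map hmp.measurable.aemeasurable
  have hsupp' : ∀ s : EuclideanSpace ℝ (Fin d), (∃ i, s i ∉ Set.Icc (0:ℝ) τ) → h' s = 0 := by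
    rintro s ⟨i, hi⟩
    refine hsupp _ ⟨i, ?_⟩
    have hadd : (s + t₀) i = s i + t₀ i := rfl
    rw [hadd]
    simp only [Set.mem_Icc] at hi ⊢
    intro ⟨h1, h2⟩
    exact hi ⟨by linarith, by linarith⟩
  have hint : (∫ s, ‖h' s‖ ^ 2) = ∫ t, ‖h t‖ ^ 2 := by
    exact integral_add_right_eq_self (fun t => ‖h t‖ ^ 2) t₀
  have hcoef : ∀ m : ℤ,
      ‖∫ s, h' s * (starRingEnd ℂ)
        (Complex.exp (2 * Real.pi * Complex.I * ((inner ℝ (C m) s : ℝ) : ℂ)))‖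
      = ‖∫ t, h t * (starRingEnd ℂ)
        (Complex.exp (2 * Real.pi * Complex.I * ((inner ℝ (C m) t : ℝ) : ℂ)))‖ := by
    intro m
    have key : (∫ s, h' s * (starRingEnd ℂ)
        (Complex.exp (2 * Real.pi * Complex.I * ((inner ℝ (C m) s : ℝ) : ℂ))))
        = (∫ t, h t * (starRingEnd ℂ)
          (Complex.exp (2 * Real.pi * Complex.I * ((inner ℝ (C m) t : ℝ) : ℂ))))
          * Complex.exp (2 * Real.pi * Complex.I * (((inner ℝ (C m) t₀ : ℝ)) : ℂ)) := by
      have e1 : (∫ s, h' s * (starRingEnd ℂ)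
          (Complex.exp (2 * Real.pi * Complex.I * ((inner ℝ (C m) s : ℝ) : ℂ))))
          = ∫ t, h t * (starRingEnd ℂ)
            (Complex.exp (2 * Real.pi * Complex.I * ((inner ℝ (C m) (t - t₀) : ℝ) : ℂ))) := by
        rw [← integral_add_right_eq_self (fun t => h t * (starRingEnd ℂ)
          (Complex.exp (2 * Real.pi * Complex.I * ((inner ℝ (C m) (t - t₀) : ℝ) : ℂ)))) t₀]
        congr 1
        ext s
        simp [hh', add_sub_cancel_right]
      rw [e1]
      rw [← integral_mul_const]
      congr 1
      ext t
      rw [conj_exp11, conj_exp11, mul_assoc (h t), ← Complex.exp_add]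
      congr 2
      rw [show (inner ℝ (C m) (t - t₀) : ℝ) = (inner ℝ (C m) t : ℝ) - (inner ℝ (C m) t₀ : ℝ) from
        inner_sub_right _ _ _]
      push_cast
      ring
    rw [key, norm_mul, exp_norm_one11, mul_one]
  obtain ⟨l, u⟩ := hframe h' hmem' hsupp'
  rw [hint] at l u
  constructor
  · refine le_trans l (le_of_eq ?_)
    exact tsum_congr fun m => by rw [hcoef m]
  · refine le_trans (le_of_eq ?_) u
    exact (tsum_congr fun m => by rw [hcoef m]).symm

set_option maxHeartbeats 1600000 in
private lemma key11 {d : ℕ}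
    (K : Lp ℂ 2 (volume : Measure (EuclideanSpace ℝ (Fin d))) →L[ℂ]
         Lp ℂ 2 (volume : Measure (EuclideanSpace ℝ (Fin d))))
    (C : ℤ → EuclideanSpace ℝ (Fin d))
    (Bmat : EuclideanSpace ℝ (Fin d) ≃L[ℝ] EuclideanSpace ℝ (Fin d))
    (g g' : EuclideanSpace ℝ (Fin d) → ℂ)
    (hg' : StronglyMeasurable g')
    (heq : g =ᵐ[(volume : Measure (EuclideanSpace ℝ (Fin d)))] g')
    (hg'mem : MemLp g' 2 (volume : Measure (EuclideanSpace ℝ (Fin d))))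
    (A0 B0 B τ : ℝ) (hA0 : 0 < A0) (hB0 : 0 < B0) (hB : 0 < B) (hτ : 0 < τ)
    (hframe : ∀ h : EuclideanSpace ℝ (Fin d) → ℂ,
      MemLp h 2 (volume : Measure (EuclideanSpace ℝ (Fin d))) →
      (∀ t : EuclideanSpace ℝ (Fin d), (∃ i, t i ∉ Set.Icc (0 : ℝ) τ) → h t = 0) →
      A0 * ∫ t, ‖h t‖ ^ 2 ≤ (∑' m : ℤ, ‖∫ t, h t * (starRingEnd ℂ)
          (Complex.exp (2 * Real.pi * Complex.I * ((inner ℝ (C m) t : ℝ) : ℂ)))‖ ^ 2) ∧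
      (∑' m : ℤ, ‖∫ t, h t * (starRingEnd ℂ)
          (Complex.exp (2 * Real.pi * Complex.I * ((inner ℝ (C m) t : ℝ) : ℂ)))‖ ^ 2)
        ≤ B0 * ∫ t, ‖h t‖ ^ 2)
    (hKWHu : ∀ f : Lp ℂ 2 (volume : Measure (EuclideanSpace ℝ (Fin d))),
      (∑' p : ℤ × (Fin d → ℤ),
          ‖∫ t, f t * (starRingEnd ℂ)
            (gaborFn11 (C p.1) (Bmat (WithLp.toLp 2 (fun i => ((p.2 i : ℝ))))) g t)‖ ^ 2)
        ≤ B * ‖K f‖ ^ 2)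
    (t₀ : EuclideanSpace ℝ (Fin d))
    (E : Set (EuclideanSpace ℝ (Fin d))) (hE : MeasurableSet E)
    (hEsub : ∀ t ∈ E, ∀ i, t i ∈ Set.Icc (t₀ i) (t₀ i + τ))
    (hEfin : volume E ≠ ⊤)
    (hGfin : (∫⁻ t in E, ∑' n : Fin d → ℤ,
        ((‖g' (t - Bmat (WithLp.toLp 2 (fun i => ((n i : ℝ)))))‖₊ : ENNReal))^2) ≠ ⊤) :
    A0 * (∫⁻ t in E, ∑' n : Fin d → ℤ,
        ((‖g' (t - Bmat (WithLp.toLp 2 (fun i => ((n i : ℝ)))))‖₊ : ENNReal))^2).toReal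
      ≤ B * ‖K‖^2 * (volume E).toReal := by
  classical
  set b : (Fin d → ℤ) → EuclideanSpace ℝ (Fin d) :=
    fun n => Bmat (WithLp.toLp 2 (fun i => ((n i : ℝ)))) with hb
  set ℓ : (Fin d → ℤ) → ENNReal :=
    fun n => ∫⁻ t in E, ((‖g' (t - b n)‖₊ : ENNReal))^2 with hℓ
  have meas_n : ∀ n, Measurable fun t : EuclideanSpace ℝ (Fin d) =>
      ((‖g' (t - b n)‖₊ : ENNReal))^2 := by
    intro n
    exact ((hg'.measurable.comp ((continuous_id.sub continuous_const).measurable)).nnnorm.coe_nnreal_ennreal).pow_const 2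
  have hL : ∑' n, ℓ n = ∫⁻ t in E, ∑' n : Fin d → ℤ, ((‖g' (t - b n)‖₊ : ENNReal))^2 :=
    (lintegral_tsum fun n => (meas_n n).aemeasurable).symm
  have hLfin : ∑' n, ℓ n ≠ ⊤ := by rw [hL]; exact hGfin
  have hfin_n : ∀ n, ℓ n ≠ ⊤ := fun n => ne_top_of_le_ne_top hLfin (ENNReal.le_tsum n)
  set r : (Fin d → ℤ) → ℝ := fun n => (ℓ n).toReal with hr
  have hrpos : ∀ n, 0 ≤ r n := fun n => ENNReal.toReal_nonneg
  have hrsum : Summable r := ENNReal.summable_toReal hLfin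
  have hR : ∑' n, r n = (∫⁻ t in E, ∑' n : Fin d → ℤ,
      ((‖g' (t - b n)‖₊ : ENNReal))^2).toReal := by
    rw [← hL, ENNReal.tsum_toReal_eq hfin_n]
  -- the windowed functions
  set hfun : (Fin d → ℤ) → EuclideanSpace ℝ (Fin d) → ℂ :=
    fun n => E.indicator (fun s => (starRingEnd ℂ) (g' (s - b n))) with hhfun
  have htrans : ∀ n, MemLp (fun t : EuclideanSpace ℝ (Fin d) => g' (t - b n)) 2
      (volume : Measure (EuclideanSpace ℝ (Fin d))) := by
    intro n
    have hmp : MeasurePreserving (fun s : EuclideanSpace ℝ (Fin d) => s + (-(b n)))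
        volume volume := measurePreserving_add_right volume (-(b n))
    have h1 : MemLp g' 2 (Measure.map (fun s : EuclideanSpace ℝ (Fin d) => s + (-(b n)))
        volume) := by rw [hmp.map_eq]; exact hg'mem
    have := h1.comp_of_map hmp.measurable.aemeasurable
    simpa [Function.comp_def, sub_eq_add_neg] using this
  have hmem_n : ∀ n, MemLp (hfun n) 2 (volume : Measure (EuclideanSpace ℝ (Fin d))) := by
    intro n
    refine MemLp.indicator hE ?_
    exact (htrans n).of_le
      (RCLike.continuous_conj.comp_aestronglyMeasurable (htrans n).1)
      (Filter.Eventually.of_forall fun x => by rw [RCLike.norm_conj])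
  -- L² norms
  have hr_n : ∀ n, (∫ t, ‖hfun n t‖ ^ 2) = r n := by
    intro n
    have hmeas : AEStronglyMeasurable (fun t : EuclideanSpace ℝ (Fin d) => ‖hfun n t‖ ^ 2)
        (volume : Measure (EuclideanSpace ℝ (Fin d))) :=
      ((hmem_n n).1.norm.aemeasurable.pow_const 2).aestronglyMeasurable
    rw [integral_eq_lintegral_of_nonneg_ae
      (Filter.Eventually.of_forall fun t => by positivity) hmeas]
    congr 1
    have hpt : ∀ t, ENNReal.ofReal (‖hfun n t‖ ^ 2)
        = E.indicator (fun s => ((‖g' (s - b n)‖₊ : ENNReal))^2) t := by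
      intro t
      by_cases ht : t ∈ E
      · rw [Set.indicator_of_mem ht]
        have h1 : hfun n t = (starRingEnd ℂ) (g' (t - b n)) := Set.indicator_of_mem ht _
        rw [h1, ENNReal.ofReal_pow (norm_nonneg _), ← coe_nnnorm, ENNReal.ofReal_coe_nnreal,
          RCLike.nnnorm_conj]
      · rw [Set.indicator_of_notMem ht]
        have h1 : hfun n t = 0 := Set.indicator_of_notMem ht _
        rw [h1]
        simp
    simp_rw [hpt]
    rw [lintegral_indicator hE]
  -- frame bounds for each window
  have hsupp_n : ∀ n, ∀ t : EuclideanSpace ℝ (Fin d),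
      (∃ i, t i ∉ Set.Icc (t₀ i) (t₀ i + τ)) → hfun n t = 0 := by
    intro n t ⟨i, hi⟩
    have : t ∉ E := fun htE => hi (hEsub t htE i)
    simp [hhfun, Set.indicator_of_notMem this]
  have hfb := fun n => frame_translate11 C A0 B0 τ hframe t₀ (hfun n) (hmem_n n) (hsupp_n n)
  set a : ℤ × (Fin d → ℤ) → ℝ := fun p =>
    ‖∫ t, hfun p.2 t * (starRingEnd ℂ)
      (Complex.exp (2 * Real.pi * Complex.I * ((inner ℝ (C p.1) t : ℝ) : ℂ)))‖ ^ 2 with ha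
  have hanneg : ∀ p, 0 ≤ a p := fun p => by positivity
  set T : (Fin d → ℤ) → ℝ := fun n => ∑' m : ℤ, a (m, n) with hT
  have hTlow : ∀ n, A0 * r n ≤ T n := fun n => by
    have := (hfb n).1; rwa [hr_n n] at this
  have hThigh : ∀ n, T n ≤ B0 * r n := fun n => by
    have := (hfb n).2; rwa [hr_n n] at this
  have hTnneg : ∀ n, 0 ≤ T n := fun n => tsum_nonneg fun m => hanneg (m, n)
  -- summability in m for each n
  have hmsum : ∀ n, Summable fun m : ℤ => a (m, n) := by
    intro n
    rcases (hrpos n).eq_or_lt with h0 | hpos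
    · -- r n = 0 : all coefficients vanish
      have hint0 : (∫ t, ‖hfun n t‖ ^ 2) = 0 := by rw [hr_n n, ← h0]
      have hInt : Integrable (fun t : EuclideanSpace ℝ (Fin d) => ‖hfun n t‖ ^ 2)
          (volume : Measure (EuclideanSpace ℝ (Fin d))) := by
        have h2 := (hmem_n n).integrable_norm_rpow two_ne_zero ENNReal.ofNat_ne_top
        refine h2.congr ?_
        refine Filter.Eventually.of_forall fun t => ?_
        have h3 : ((2:ENNReal)).toReal = ((2:ℕ):ℝ) := by norm_num
        rw [h3]
        exact Real.rpow_natCast _ 2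
      have hzero := (integral_eq_zero_iff_of_nonneg
        (fun t => by positivity) hInt).mp hint0
      have hz : ∀ m : ℤ, a (m, n) = 0 := by
        intro m
        have : (fun t => hfun n t * (starRingEnd ℂ)
            (Complex.exp (2 * Real.pi * Complex.I * ((inner ℝ (C m) t : ℝ) : ℂ))))
            =ᵐ[(volume : Measure (EuclideanSpace ℝ (Fin d)))] 0 := by
          filter_upwards [hzero] with t ht
          have ht' : ‖hfun n t‖ ^ 2 = 0 := ht
          have : hfun n t = 0 := by
            have := pow_eq_zero_iff (n := 2) (by norm_num) |>.mp ht'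
            exact norm_eq_zero.mp this
          simp [this]
        simp only [ha]
        rw [integral_congr_ae this]
        simp
      exact (summable_zero).congr fun m => (hz m).symm
    · by_contra hns
      have h0 : T n = 0 := tsum_eq_zero_of_not_summable hns
      have h1 := hTlow n
      rw [h0] at h1
      have h2 : 0 < A0 * r n := mul_pos hA0 hpos
      linarith
  -- the Lp indicator function
  have hf₀mem : MemLp (E.indicator fun _ => (1:ℂ)) 2
      (volume : Measure (EuclideanSpace ℝ (Fin d))) :=
    memLp_indicator_const 2 hE 1 (Or.inr hEfin)
  set fL : Lp ℂ 2 (volume : Measure (EuclideanSpace ℝ (Fin d))) := hf₀mem.toLp _ with hfL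
  have hfLnorm : ‖fL‖ ^ 2 = (volume E).toReal := by
    rw [hfL, Lp.norm_toLp _ hf₀mem,
      eLpNorm_indicator_const hE two_ne_zero ENNReal.ofNat_ne_top]
    simp only [enorm_one, nnnorm_one, ENNReal.coe_one, one_mul, ENNReal.toReal_ofNat]
    rw [← ENNReal.toReal_rpow]
    rw [← Real.rpow_natCast ((volume E).toReal ^ ((1:ℝ)/2)) 2, ← Real.rpow_mul
      ENNReal.toReal_nonneg]
    norm_num
  -- matching the coefficients
  have hmatch : ∀ p : ℤ × (Fin d → ℤ),
      ‖∫ t, fL t * (starRingEnd ℂ)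
        (gaborFn11 (C p.1) (Bmat (WithLp.toLp 2 (fun i => ((p.2 i : ℝ))))) g t)‖ ^ 2 = a p := by
    rintro ⟨m, n⟩
    have hcoe : (fL : EuclideanSpace ℝ (Fin d) → ℂ)
        =ᵐ[(volume : Measure (EuclideanSpace ℝ (Fin d)))] E.indicator fun _ => (1:ℂ) :=
      hf₀mem.coeFn_toLp
    have hgg : (fun t : EuclideanSpace ℝ (Fin d) => g (t - b n))
        =ᵐ[(volume : Measure (EuclideanSpace ℝ (Fin d)))] (fun t => g' (t - b n)) := by
      have hmp : MeasurePreserving (fun s : EuclideanSpace ℝ (Fin d) => s + (-(b n)))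
          volume volume := measurePreserving_add_right volume _
      have h3 : g =ᵐ[Measure.map (fun s : EuclideanSpace ℝ (Fin d) => s + (-(b n)))
          (volume : Measure (EuclideanSpace ℝ (Fin d)))] g' := by
        rw [hmp.map_eq]; exact heq
      have h2 := MeasureTheory.ae_eq_comp (μ := (volume : Measure (EuclideanSpace ℝ (Fin d))))
        hmp.measurable.aemeasurable h3
      have h4 : (fun t : EuclideanSpace ℝ (Fin d) => g (t - b n))
          = g ∘ (fun s => s + (-(b n))) := by
        funext t; simp [Function.comp, sub_eq_add_neg]
      have h5 : (fun t : EuclideanSpace ℝ (Fin d) => g' (t - b n))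
          = g' ∘ (fun s => s + (-(b n))) := by
        funext t; simp [Function.comp, sub_eq_add_neg]
      rw [h4, h5]
      exact h2
    have hae : (fun t => (fL : EuclideanSpace ℝ (Fin d) → ℂ) t * (starRingEnd ℂ)
        (gaborFn11 (C m) (b n) g t))
        =ᵐ[(volume : Measure (EuclideanSpace ℝ (Fin d)))]
        (fun t => hfun n t * (starRingEnd ℂ)
          (Complex.exp (2 * Real.pi * Complex.I * ((inner ℝ (C m) t : ℝ) : ℂ)))) := by
      filter_upwards [hcoe, hgg] with t h1 h2
      simp only [hhfun, gaborFn11, map_mul]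
      rw [h1, h2]
      by_cases ht : t ∈ E
      · rw [Set.indicator_of_mem ht, Set.indicator_of_mem ht]
        ring
      · rw [Set.indicator_of_notMem ht, Set.indicator_of_notMem ht]
        ring
    rw [integral_congr_ae hae]
  set S : ℝ := ∑' p : ℤ × (Fin d → ℤ), a p with hS
  have hSle : S ≤ B * ‖K‖ ^ 2 * (volume E).toReal := by
    have h1 := hKWHu fL
    rw [tsum_congr hmatch] at h1
    refine h1.trans ?_
    rw [← hfLnorm]
    calc B * ‖K fL‖ ^ 2 ≤ B * (‖K‖ * ‖fL‖) ^ 2 := by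
          refine mul_le_mul_of_nonneg_left ?_ hB.le
          exact pow_le_pow_left₀ (norm_nonneg _) (K.le_opNorm fL) 2
      _ = B * ‖K‖ ^ 2 * ‖fL‖ ^ 2 := by ring
  -- summability of the full family
  have hasum : Summable a := by
    refine summable_of_sum_le (c := B0 * ∑' n, r n) hanneg ?_
    intro u
    calc ∑ p ∈ u, a p
        ≤ ∑ p ∈ (u.image Prod.fst) ×ˢ (u.image Prod.snd), a p :=
          Finset.sum_le_sum_of_subset_of_nonneg Finset.subset_product
            (fun p _ _ => hanneg p)
      _ = ∑ n ∈ u.image Prod.snd, ∑ m ∈ u.image Prod.fst, a (m, n) :=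
          Finset.sum_product_right _ _ _
      _ ≤ ∑ n ∈ u.image Prod.snd, T n := by
          refine Finset.sum_le_sum fun n _ => ?_
          exact Summable.sum_le_tsum _ (fun m _ => hanneg (m, n)) (hmsum n)
      _ ≤ ∑ n ∈ u.image Prod.snd, B0 * r n := Finset.sum_le_sum fun n _ => hThigh n
      _ = B0 * ∑ n ∈ u.image Prod.snd, r n := (Finset.mul_sum _ _ _).symm
      _ ≤ B0 * ∑' n, r n := by
          refine mul_le_mul_of_nonneg_left ?_ hB0.le
          exact Summable.sum_le_tsum _ (fun n _ => hrpos n) hrsum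
  -- S = ∑' n, T n  and partial sums of T bounded by S
  have haswap : Summable fun q : (Fin d → ℤ) × ℤ => a q.swap := hasum.prod_symm
  have hTsum : Summable T := by
    have h2 := (summable_prod_of_nonneg (fun q => hanneg q.swap)).mp haswap
    exact h2.2
  have hTS : ∑' n, T n = S := by
    have h1 : ∑' q : (Fin d → ℤ) × ℤ, a q.swap = S := by
      rw [hS]
      exact (Equiv.prodComm (Fin d → ℤ) ℤ).tsum_eq a
    rw [← h1, Summable.tsum_prod' haswap fun n => hmsum n]
    rfl
  -- conclude
  have hfinal : ∀ u : Finset (Fin d → ℤ), ∑ n ∈ u, r n ≤ S / A0 := by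
    intro u
    rw [le_div_iff₀ hA0, mul_comm]
    calc A0 * ∑ n ∈ u, r n = ∑ n ∈ u, A0 * r n := Finset.mul_sum _ _ _
      _ ≤ ∑ n ∈ u, T n := Finset.sum_le_sum fun n _ => hTlow n
      _ ≤ ∑' n, T n := Summable.sum_le_tsum _ (fun n _ => hTnneg n) hTsum
      _ = S := hTS
  have : ∑' n, r n ≤ S / A0 := Summable.tsum_le_of_sum_le hrsum hfinal
  have h2 : A0 * ∑' n, r n ≤ S := by
    rw [mul_comm]
    exact (le_div_iff₀ hA0).mp this
  rw [← hR]
  exact h2.trans hSle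

set_option maxHeartbeats 6400000 in
/-- necessary condition on `g` for `{E_{C_m}T_{Bn}g}` to be a
`K`-Weyl–Heisenberg frame: `Σ_n |g(t−Bn)|² ≤ (B/A₀)‖K‖²` a.e. -/
theorem stmt_11 {d : ℕ}
    (K : Lp ℂ 2 (volume : Measure (EuclideanSpace ℝ (Fin d))) →L[ℂ]
         Lp ℂ 2 (volume : Measure (EuclideanSpace ℝ (Fin d))))
    (C : ℤ → EuclideanSpace ℝ (Fin d))
    (Bmat : EuclideanSpace ℝ (Fin d) ≃L[ℝ] EuclideanSpace ℝ (Fin d))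
    (g : EuclideanSpace ℝ (Fin d) → ℂ)
    (hgmem : MemLp g 2 (volume : Measure (EuclideanSpace ℝ (Fin d))))
    (A B A0 B0 τ : ℝ) (hA : 0 < A) (hB : 0 < B) (hA0 : 0 < A0) (hB0 : 0 < B0) (hτ : 0 < τ)
    -- `{E_{C_m}}` is a frame for `L²([0,τ]^d)` with bounds `A₀, B₀`
    (hframe : ∀ h : EuclideanSpace ℝ (Fin d) → ℂ,
      MemLp h 2 (volume : Measure (EuclideanSpace ℝ (Fin d))) →
      (∀ t : EuclideanSpace ℝ (Fin d), (∃ i, t i ∉ Set.Icc (0 : ℝ) τ) → h t = 0) →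
      A0 * ∫ t, ‖h t‖ ^ 2 ≤ (∑' m : ℤ, ‖∫ t, h t * (starRingEnd ℂ)
          (Complex.exp (2 * Real.pi * Complex.I * ((inner ℝ (C m) t : ℝ) : ℂ)))‖ ^ 2) ∧
      (∑' m : ℤ, ‖∫ t, h t * (starRingEnd ℂ)
          (Complex.exp (2 * Real.pi * Complex.I * ((inner ℝ (C m) t : ℝ) : ℂ)))‖ ^ 2)
        ≤ B0 * ∫ t, ‖h t‖ ^ 2)
    -- `{E_{C_m}T_{Bn}g}` is a `K`-Weyl–Heisenberg frame with bounds `A, B`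
    (hKWH : ∀ f : Lp ℂ 2 (volume : Measure (EuclideanSpace ℝ (Fin d))),
      A * ‖K.adjoint f‖ ^ 2 ≤ (∑' p : ℤ × (Fin d → ℤ),
          ‖∫ t, f t * (starRingEnd ℂ)
            (gaborFn11 (C p.1) (Bmat (WithLp.toLp 2 (fun i => ((p.2 i : ℝ))))) g t)‖ ^ 2) ∧
      (∑' p : ℤ × (Fin d → ℤ),
          ‖∫ t, f t * (starRingEnd ℂ)
            (gaborFn11 (C p.1) (Bmat (WithLp.toLp 2 (fun i => ((p.2 i : ℝ))))) g t)‖ ^ 2)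
        ≤ B * ‖K f‖ ^ 2) :
    ∀ᵐ t : EuclideanSpace ℝ (Fin d) ∂volume,
      (∑' n : Fin d → ℤ, ‖g (t - Bmat (WithLp.toLp 2 (fun i => (n i : ℝ))))‖ ^ 2) ≤ (B / A0) * ‖K‖ ^ 2 := by
  classical
  set b : (Fin d → ℤ) → EuclideanSpace ℝ (Fin d) :=
    fun n => Bmat (WithLp.toLp 2 (fun i => ((n i : ℝ)))) with hb
  obtain ⟨g', hg'meas, heq'⟩ : ∃ g' : EuclideanSpace ℝ (Fin d) → ℂ,
      StronglyMeasurable g' ∧ g =ᵐ[(volume : Measure (EuclideanSpace ℝ (Fin d)))] g' :=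
    ⟨hgmem.1.mk g, hgmem.1.stronglyMeasurable_mk, hgmem.1.ae_eq_mk⟩
  have hg'mem : MemLp g' 2 (volume : Measure (EuclideanSpace ℝ (Fin d))) :=
    hgmem.ae_eq heq'
  set c : ℝ := (B / A0) * ‖K‖ ^ 2 with hc
  have hcnn : 0 ≤ c := mul_nonneg (div_pos hB hA0).le (sq_nonneg _)
  -- translate the a.e. equality g = g'
  have htrans_ae : ∀ n : Fin d → ℤ,
      (fun t : EuclideanSpace ℝ (Fin d) => g (t - b n))
        =ᵐ[(volume : Measure (EuclideanSpace ℝ (Fin d)))] (fun t => g' (t - b n)) := by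
    intro n
    have hmp : MeasurePreserving (fun s : EuclideanSpace ℝ (Fin d) => s + (-(b n)))
        volume volume := measurePreserving_add_right volume _
    have h3 : g =ᵐ[Measure.map (fun s : EuclideanSpace ℝ (Fin d) => s + (-(b n)))
        (volume : Measure (EuclideanSpace ℝ (Fin d)))] g' := by
      rw [hmp.map_eq]; exact heq'
    have h2 := MeasureTheory.ae_eq_comp (μ := (volume : Measure (EuclideanSpace ℝ (Fin d))))
      hmp.measurable.aemeasurable h3
    have h4 : (fun t : EuclideanSpace ℝ (Fin d) => g (t - b n))
        = g ∘ (fun s => s + (-(b n))) := by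
      funext t; simp [Function.comp, sub_eq_add_neg]
    have h5 : (fun t : EuclideanSpace ℝ (Fin d) => g' (t - b n))
        = g' ∘ (fun s => s + (-(b n))) := by
      funext t; simp [Function.comp, sub_eq_add_neg]
    rw [h4, h5]
    exact h2
  have hall : ∀ᵐ t : EuclideanSpace ℝ (Fin d) ∂volume,
      ∀ n : Fin d → ℤ, g (t - b n) = g' (t - b n) :=
    ae_all_iff.mpr fun n => htrans_ae n
  -- the periodization function
  set G : EuclideanSpace ℝ (Fin d) → ENNReal :=
    fun t => ∑' n : Fin d → ℤ, ((‖g' (t - b n)‖₊ : ENNReal))^2 with hG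
  have hGmeas : Measurable G := by
    refine Measurable.ennreal_tsum fun n => ?_
    exact ((hg'meas.measurable.comp
      ((continuous_id.sub continuous_const).measurable)).nnnorm.coe_nnreal_ennreal).pow_const 2
  -- the cubes
  set Q : (Fin d → ℤ) → Set (EuclideanSpace ℝ (Fin d)) :=
    fun j => {t | ∀ i, t i ∈ Set.Icc (τ * j i) (τ * j i + τ)} with hQ
  have hQcompact : ∀ j, IsCompact (Q j) := by
    intro j
    have h1 : Q j = (EuclideanSpace.equiv (Fin d) ℝ) ⁻¹'
        (Set.univ.pi fun i => Set.Icc (τ * j i) (τ * j i + τ)) := by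
      ext t
      simp [hQ, Set.mem_pi, Pi.le_def, Set.mem_Icc, forall_and]
    rw [h1]
    exact ((EuclideanSpace.equiv (Fin d) ℝ).toHomeomorph).isCompact_preimage.mpr
      (isCompact_univ_pi fun i => isCompact_Icc)
  have hQmeas : ∀ j, MeasurableSet (Q j) := fun j =>
    (hQcompact j).isClosed.measurableSet
  -- each bad piece is null
  have hnull : ∀ (k q : ℕ) (j : Fin d → ℤ),
      volume (Q j ∩ {t | ENNReal.ofReal (c + 1/(k+1)) ≤ G t ∧ G t ≤ (q : ENNReal)}) = 0 := by
    intro k q j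
    by_contra hpos
    set E : Set (EuclideanSpace ℝ (Fin d)) :=
      Q j ∩ {t | ENNReal.ofReal (c + 1/(k+1)) ≤ G t ∧ G t ≤ (q : ENNReal)} with hE
    have hEmeas : MeasurableSet E := by
      refine (hQmeas j).inter ?_
      have h1 : {t : EuclideanSpace ℝ (Fin d) |
          ENNReal.ofReal (c + 1/(k+1)) ≤ G t ∧ G t ≤ (q : ENNReal)}
          = G ⁻¹' (Set.Icc (ENNReal.ofReal (c + 1/(k+1))) (q : ENNReal)) := rfl
      rw [h1]
      exact hGmeas measurableSet_Icc
    have hEfin : volume E ≠ ⊤ :=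
      (lt_of_le_of_lt (measure_mono Set.inter_subset_left)
        (hQcompact j).measure_lt_top).ne
    have hGleq : ∀ t ∈ E, G t ≤ (q : ENNReal) := fun t ht => ht.2.2
    have hGfinE : (∫⁻ t in E, G t) ≠ ⊤ := by
      have h1 : (∫⁻ t in E, G t) ≤ ∫⁻ _ in E, (q : ENNReal) :=
        setLIntegral_mono measurable_const hGleq
      rw [setLIntegral_const] at h1
      exact (lt_of_le_of_lt h1 (ENNReal.mul_lt_top (ENNReal.natCast_lt_top q)
        hEfin.lt_top)).ne
    -- apply the key lemma with cube corner t₀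
    set t₀ : EuclideanSpace ℝ (Fin d) := (WithLp.toLp 2 (fun i => τ * (j i : ℝ))) with ht₀
    have hEsub : ∀ t ∈ E, ∀ i, t i ∈ Set.Icc (t₀ i) (t₀ i + τ) := by
      intro t ht i
      exact ht.1 i
    have hkey := key11 K C Bmat g g' hg'meas heq' hg'mem A0 B0 B τ hA0 hB0 hB hτ hframe
      (fun f => (hKWH f).2) t₀ E hEmeas hEsub hEfin hGfinE
    -- lower bound for the integral
    have hlow : ENNReal.ofReal (c + 1/(k+1)) * volume E ≤ ∫⁻ t in E, G t := by
      have h1 : (∫⁻ _ in E, ENNReal.ofReal (c + 1/(k+1))) ≤ ∫⁻ t in E, G t :=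
        setLIntegral_mono hGmeas fun t ht => ht.2.1
      rwa [setLIntegral_const] at h1
    have hx : 0 < (volume E).toReal := ENNReal.toReal_pos hpos hEfin
    have hεpos : (0:ℝ) < 1/(k+1) := by positivity
    have h1 : (c + 1/(k+1)) * (volume E).toReal ≤ (∫⁻ t in E, G t).toReal := by
      have h2 := ENNReal.toReal_mono hGfinE hlow
      rwa [ENNReal.toReal_mul, ENNReal.toReal_ofReal (by linarith)] at h2
    have hBc : A0 * c = B * ‖K‖ ^ 2 := by
      rw [hc, ← mul_assoc, mul_div_assoc', mul_comm A0 B, mul_div_assoc,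
        div_self hA0.ne', mul_one]
    rw [← hBc] at hkey
    have h5 : A0 * ((c + 1/(k+1)) * (volume E).toReal) ≤ A0 * (c * (volume E).toReal) := by
      calc A0 * ((c + 1/(k+1)) * (volume E).toReal)
          ≤ A0 * (∫⁻ t in E, G t).toReal := mul_le_mul_of_nonneg_left h1 hA0.le
        _ ≤ A0 * c * (volume E).toReal := hkey
        _ = A0 * (c * (volume E).toReal) := by ring
    nlinarith [mul_pos (mul_pos hA0 hεpos) hx]
  -- assemble the bad set
  have hunion : volume (⋃ k : ℕ, ⋃ q : ℕ, ⋃ j : Fin d → ℤ,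
      (Q j ∩ {t | ENNReal.ofReal (c + 1/(k+1)) ≤ G t ∧ G t ≤ (q : ENNReal)})) = 0 :=
    measure_iUnion_null fun k => measure_iUnion_null fun q =>
      measure_iUnion_null fun j => hnull k q j
  have hcover : {t : EuclideanSpace ℝ (Fin d) |
      ¬ ((∑' n : Fin d → ℤ, ‖g' (t - b n)‖ ^ 2) ≤ c)} ⊆
      ⋃ k : ℕ, ⋃ q : ℕ, ⋃ j : Fin d → ℤ,
        (Q j ∩ {t | ENNReal.ofReal (c + 1/(k+1)) ≤ G t ∧ G t ≤ (q : ENNReal)}) := by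
    intro t ht
    simp only [Set.mem_setOf_eq, not_le] at ht
    -- the real family is summable (otherwise the tsum is 0 ≤ c)
    have hsum : Summable fun n : Fin d → ℤ => ‖g' (t - b n)‖ ^ 2 := by
      by_contra hns
      rw [tsum_eq_zero_of_not_summable hns] at ht
      exact absurd ht (not_lt.mpr hcnn)
    set s : ℝ := ∑' n : Fin d → ℤ, ‖g' (t - b n)‖ ^ 2 with hs
    have hspos : c < s := ht
    -- identify G t with ofReal s
    have hsnn : Summable fun n : Fin d → ℤ => (‖g' (t - b n)‖₊ ^ 2 : NNReal) := by
      rw [← NNReal.summable_coe]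
      refine hsum.congr fun n => ?_
      push_cast
      rfl
    have hGt : G t = ENNReal.ofReal s := by
      have h1 : G t = ((∑' n : Fin d → ℤ, (‖g' (t - b n)‖₊ ^ 2 : NNReal) : NNReal) : ENNReal) := by
        rw [ENNReal.coe_tsum hsnn]
        exact tsum_congr fun n => by push_cast; rfl
      have h2 : s = ((∑' n : Fin d → ℤ, (‖g' (t - b n)‖₊ ^ 2 : NNReal) : NNReal) : ℝ) := by
        rw [NNReal.coe_tsum]
        exact tsum_congr fun n => by push_cast; rfl
      rw [h1, h2, ENNReal.ofReal_coe_nnreal]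
    obtain ⟨k, hk⟩ := exists_nat_one_div_lt (sub_pos.mpr hspos)
    obtain ⟨q, hq⟩ := exists_nat_ge s
    refine Set.mem_iUnion.mpr ⟨k, Set.mem_iUnion.mpr ⟨q, Set.mem_iUnion.mpr ⟨fun i => ⌊t i / τ⌋, ?_, ?_, ?_⟩⟩⟩
    · -- membership in the cube
      intro i
      constructor
      · calc τ * (⌊t i / τ⌋ : ℝ) ≤ τ * (t i / τ) :=
              mul_le_mul_of_nonneg_left (Int.floor_le _) hτ.le
          _ = t i := by field_simp
      · have h3 : t i / τ < (⌊t i / τ⌋ : ℝ) + 1 := Int.lt_floor_add_one _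
        have h4 : t i < τ * ((⌊t i / τ⌋ : ℝ) + 1) := by
          rw [← div_lt_iff₀' hτ]
          exact h3
        nlinarith
    · rw [hGt]
      refine ENNReal.ofReal_le_ofReal ?_
      have : (1:ℝ)/(k+1) < s - c := hk
      linarith
    · rw [hGt, ← ENNReal.ofReal_natCast q]
      exact ENNReal.ofReal_le_ofReal hq
  have hae' : ∀ᵐ t : EuclideanSpace ℝ (Fin d) ∂volume,
      (∑' n : Fin d → ℤ, ‖g' (t - b n)‖ ^ 2) ≤ c := by
    rw [MeasureTheory.ae_iff]
    exact measure_mono_null hcover hunion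
  filter_upwards [hae', hall] with t h1 h2
  have h3 : (∑' n : Fin d → ℤ, ‖g (t - b n)‖ ^ 2)
      = ∑' n : Fin d → ℤ, ‖g' (t - b n)‖ ^ 2 :=
    tsum_congr fun n => by rw [h2 n]
  rw [hc] at h1
  exact le_of_eq_of_le h3 h1
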